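/- For ν > 0, let λ(ν) := inf { (∫₀¹ (|u'(r)|² + ν² r^{-2} |u(r)|²) r dr) / (∫₀¹ |u(r)|² r dr) }, the infimum over all nonzero u : [0,1] → ℂ that are continuous on [0,1], continuously differentiable on (0,1], satisfy u(0) = 0 and have finite numerator. Then 2ν ≤ λ(ν) ≤ 2ν(1+ν). (Proposition B.1; λ(ν) equals (j'_ν)², the square of the first positive zero of the derivative of the Bessel function J_ν, so this gives √(2ν) ≤ j'_ν ≤ √(2ν(1+ν)).) -/

import Mathlib

open MeasureTheory Real Set

noncomputable section

/-- The set of Rayleigh quotients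
`(∫₀¹ (|u'|² + ν² r⁻²|u|²) r dr) / (∫₀¹ |u|² r dr)` over nonzero `u : [0,1] → ℂ`
continuous on `[0,1]`, continuously differentiable on `(0,1]`, with `u(0) = 0` and
finite numerator. -/
def besselRayleighSet (ν : ℝ) : Set ℝ :=
  {t : ℝ | ∃ u u' : ℝ → ℂ,
    ContinuousOn u (Set.Icc 0 1) ∧
    (∀ r ∈ Set.Ioc (0:ℝ) 1, HasDerivAt u (u' r) r) ∧
    ContinuousOn u' (Set.Ioc 0 1) ∧
    u 0 = 0 ∧ (∃ r ∈ Set.Icc (0:ℝ) 1, u r ≠ 0) ∧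
    IntervalIntegrable (fun r => (‖u' r‖ ^ 2 + ν ^ 2 / r ^ 2 * ‖u r‖ ^ 2) * r) volume 0 1 ∧
    t = (∫ r in (0:ℝ)..1, (‖u' r‖ ^ 2 + ν ^ 2 / r ^ 2 * ‖u r‖ ^ 2) * r) /
        (∫ r in (0:ℝ)..1, ‖u r‖ ^ 2 * r)}

open scoped ENNReal

private lemma lower_bound (ν : ℝ) (hν : 0 < ν) : ∀ t ∈ besselRayleighSet ν, 2 * ν ≤ t := by
  rintro t ⟨u, u', hu, hderiv, hu', hu0, ⟨r₀, hr₀, hur₀⟩, hInt, rfl⟩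
  set F : ℝ → ℝ := fun r => (‖u' r‖ ^ 2 + ν ^ 2 / r ^ 2 * ‖u r‖ ^ 2) * r with hFdef
  set g : ℝ → ℝ := fun r => ‖u r‖ ^ 2 with hgdef
  set g' : ℝ → ℝ := fun r => 2 * inner ℝ (u r) (u' r) with hg'def
  -- pointwise bound
  have hbound : ∀ r ∈ Ioc (0:ℝ) 1, ν * |g' r| ≤ F r := by
    intro r hr
    have hr0 : (0:ℝ) < r := hr.1
    have hinner : |(inner ℝ (u r) (u' r) : ℝ)| ≤ ‖u r‖ * ‖u' r‖ := abs_real_inner_le_norm _ _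
    have h1 : ν * |g' r| ≤ 2 * ν * (‖u r‖ * ‖u' r‖) := by
      rw [hg'def]
      simp only [abs_mul, abs_two]
      calc ν * (2 * |(inner ℝ (u r) (u' r) : ℝ)|) ≤ ν * (2 * (‖u r‖ * ‖u' r‖)) := by
            apply mul_le_mul_of_nonneg_left (by linarith) hν.le
        _ = 2 * ν * (‖u r‖ * ‖u' r‖) := by ring
    refine h1.trans ?_
    have hF : F r = (‖u' r‖ ^ 2 * r ^ 2 + ν ^ 2 * ‖u r‖ ^ 2) / r := by
      rw [hFdef]; field_simp
    rw [hF, le_div_iff₀ hr0]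
    nlinarith [sq_nonneg (‖u' r‖ * r - ν * ‖u r‖), norm_nonneg (u r), norm_nonneg (u' r)]
  -- nonnegativity of F on Ioc
  have hFnonneg : ∀ r ∈ Ioc (0:ℝ) 1, 0 ≤ F r := by
    intro r hr
    exact le_trans (by positivity) (hbound r hr)
  -- continuity of g, g'
  have hgc : ContinuousOn g (Icc 0 1) := (hu.norm.pow 2)
  have hg'c : ContinuousOn g' (Ioc 0 1) := by
    apply continuousOn_const.mul
    exact Continuous.comp_continuousOn continuous_inner ((hu.mono Ioc_subset_Icc_self).prodMk hu')
  -- integrability of g'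
  have hg'int : IntervalIntegrable g' volume 0 1 := by
    rw [intervalIntegrable_iff_integrableOn_Ioc_of_le zero_le_one]
    rw [intervalIntegrable_iff_integrableOn_Ioc_of_le zero_le_one] at hInt
    refine Integrable.mono' (hInt.const_mul (1/ν)) (hg'c.aestronglyMeasurable measurableSet_Ioc) ?_
    filter_upwards [ae_restrict_mem measurableSet_Ioc] with r hr
    rw [Real.norm_eq_abs]
    rw [show (1/ν) * F r = F r / ν by ring, le_div_iff₀ hν]
    calc |g' r| * ν = ν * |g' r| := by ring
      _ ≤ F r := hbound r hr
  have habsint : IntervalIntegrable (fun r => |g' r|) volume 0 1 := hg'int.abs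
  -- FTC: g x ≤ ∫_0^1 |g'|
  set M : ℝ := ∫ r in (0:ℝ)..1, |g' r| with hMdef
  have hgle : ∀ x ∈ Ioc (0:ℝ) 1, g x ≤ M := by
    intro x hx
    have hsubI : uIcc (0:ℝ) x ⊆ uIcc 0 1 := by
      rw [uIcc_of_le hx.1.le, uIcc_of_le zero_le_one]
      exact Icc_subset_Icc le_rfl hx.2
    have hftc : ∫ r in (0:ℝ)..x, g' r = g x - g 0 := by
      apply intervalIntegral.integral_eq_sub_of_hasDeriv_right_of_le hx.1.le
        (hgc.mono (Icc_subset_Icc le_rfl hx.2))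
      · intro r hr
        exact ((hderiv r ⟨hr.1, hr.2.le.trans hx.2⟩).norm_sq).hasDerivWithinAt
      · exact hg'int.mono_set hsubI
    have hg0 : g 0 = 0 := by simp [hgdef, hu0]
    have h1 : g x = ∫ r in (0:ℝ)..x, g' r := by rw [hftc, hg0, sub_zero]
    rw [h1]
    calc (∫ r in (0:ℝ)..x, g' r) ≤ ∫ r in (0:ℝ)..x, |g' r| := by
          apply intervalIntegral.integral_mono_on hx.1.le
            (hg'int.mono_set hsubI)
            (habsint.mono_set hsubI)
          intro r _; exact le_abs_self _
      _ ≤ M := by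
          apply intervalIntegral.integral_mono_interval le_rfl hx.1.le hx.2 ?_ habsint
          filter_upwards with r; positivity
  -- ν M ≤ N
  set N : ℝ := ∫ r in (0:ℝ)..1, F r with hNdef
  have hMN : ν * M ≤ N := by
    rw [hMdef, hNdef, ← intervalIntegral.integral_const_mul,
      intervalIntegral.integral_of_le zero_le_one, intervalIntegral.integral_of_le zero_le_one]
    apply setIntegral_mono_on ((habsint.const_mul ν).1) hInt.1 measurableSet_Ioc
    intro r hr; exact hbound r hr
  -- denominator
  set D : ℝ := ∫ r in (0:ℝ)..1, ‖u r‖ ^ 2 * r with hDdef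
  have hDint : IntervalIntegrable (fun r => g r * r) volume 0 1 := by
    apply ContinuousOn.intervalIntegrable
    rw [uIcc_of_le zero_le_one]
    exact hgc.mul continuousOn_id
  have hDle : D ≤ M / 2 := by
    have h1 : D ≤ ∫ r in (0:ℝ)..1, M * r := by
      rw [hDdef, intervalIntegral.integral_of_le zero_le_one,
        intervalIntegral.integral_of_le zero_le_one]
      apply setIntegral_mono_on hDint.1 (((intervalIntegral.intervalIntegrable_id.const_mul M)).1) measurableSet_Ioc
      intro r hr
      exact mul_le_mul_of_nonneg_right (hgle r hr) hr.1.le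
    have h2 : (∫ r in (0:ℝ)..1, M * r) = M / 2 := by
      rw [intervalIntegral.integral_const_mul, integral_id]; ring
    linarith
  -- positivity of D
  have hr₀0 : r₀ ∈ Ioc (0:ℝ) 1 := by
    rcases eq_or_lt_of_le hr₀.1 with h | h
    · exact absurd (h ▸ hu0) hur₀
    · exact ⟨h, hr₀.2⟩
  have hDpos : 0 < D := by
    rw [hDdef]
    rw [intervalIntegral.integral_pos_iff_support_of_nonneg_ae' ?_ hDint]
    · refine ⟨zero_lt_one, ?_⟩
      -- find a small interval around r₀ where g r * r > 0
      have hcw : ContinuousWithinAt (fun r => g r * r) (Icc 0 1) r₀ :=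
        (hgc.mul continuousOn_id) r₀ hr₀
      have hpos : 0 < g r₀ * r₀ := by
        have h1 : 0 < ‖u r₀‖ := norm_pos_iff.mpr hur₀
        exact mul_pos (by rw [hgdef]; positivity) hr₀0.1
      have hev : ∀ᶠ x in nhdsWithin r₀ (Icc 0 1), 0 < g x * x :=
        hcw.eventually (eventually_gt_nhds hpos)
      rw [eventually_nhdsWithin_iff, Metric.eventually_nhds_iff] at hev
      obtain ⟨ε, hε, hball⟩ := hev
      set a : ℝ := max (r₀ - ε/2) (r₀/2) with hadef
      have ha1 : a < r₀ := by
        apply max_lt (by linarith) (by linarith [hr₀0.1])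
      have hsub : Ioc a r₀ ⊆ Function.support (fun r => g r * r) ∩ Ioc 0 1 := by
        intro x hx
        have hx0 : 0 < x := lt_of_lt_of_le (by linarith [hr₀0.1] : (0:ℝ) < r₀/2) ((le_max_right _ _).trans hx.1.le)
        have hx1 : x ≤ 1 := hx.2.trans hr₀.2
        have hdist : dist x r₀ < ε := by
          rw [Real.dist_eq, abs_lt]
          constructor
          · have := lt_of_le_of_lt (le_max_left _ _) hx.1; linarith
          · linarith [hx.2]
        have := hball hdist ⟨hx0.le, hx1⟩
        exact ⟨ne_of_gt this, hx0, hx1⟩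
      calc (0:ℝ≥0∞) < volume (Ioc a r₀) := by
            rw [Real.volume_Ioc]; simp [ha1, ENNReal.ofReal_pos, sub_pos]
        _ ≤ _ := measure_mono hsub
    · filter_upwards [ae_restrict_mem measurableSet_uIoc] with r hr
      rw [Set.uIoc_of_le zero_le_one] at hr
      have h0 : 0 < r := hr.1
      positivity
  -- conclude
  have h2νD : 2 * ν * D ≤ N := by
    calc 2 * ν * D ≤ 2 * ν * (M / 2) := by
          apply mul_le_mul_of_nonneg_left hDle (by linarith)
      _ = ν * M := by ring
      _ ≤ N := hMN
  exact (le_div_iff₀ hDpos).mpr h2νD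

private lemma upper_mem (ν : ℝ) (hν : 0 < ν) : 2 * ν * (1 + ν) ∈ besselRayleighSet ν := by
  have heq : EqOn (fun r : ℝ => (‖((ν * r ^ (ν - 1) : ℝ) : ℂ)‖ ^ 2 + ν ^ 2 / r ^ 2 * ‖((r ^ ν : ℝ) : ℂ)‖ ^ 2) * r)
      (fun r : ℝ => 2 * ν ^ 2 * r ^ (2 * ν - 1)) (Ioc 0 1) := by
    intro r hr
    have hr0 : (0:ℝ) < r := hr.1
    simp only [Complex.norm_real, Real.norm_eq_abs, sq_abs]
    have h1 : (r ^ (ν - 1)) ^ 2 = r ^ (2 * ν - 2) := by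
      rw [← Real.rpow_natCast (r ^ (ν-1)) 2, ← Real.rpow_mul hr0.le]; norm_num; ring_nf
    have h2 : (r ^ ν) ^ 2 = r ^ (2 * ν) := by
      rw [← Real.rpow_natCast (r ^ ν) 2, ← Real.rpow_mul hr0.le]; ring_nf
    have h4 : r ^ (2 * ν - 1) = r ^ (2 * ν - 2) * r := by
      rw [show (2*ν-1) = (2*ν-2)+1 by ring, Real.rpow_add hr0, Real.rpow_one]
    have h5 : r ^ (2 * ν) = r ^ (2 * ν - 2) * r ^ (2:ℕ) := by
      rw [show (2*ν) = (2*ν-2)+((2:ℕ):ℝ) by push_cast; ring, Real.rpow_add hr0, Real.rpow_natCast]; norm_num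
    field_simp [mul_pow, h1, h2]
    rw [h1, h2, show ν * 2 - 1 = 2 * ν - 1 by ring, h4, h5]; ring
  have heqd : EqOn (fun r : ℝ => ‖((r ^ ν : ℝ) : ℂ)‖ ^ 2 * r)
      (fun r : ℝ => r ^ (2 * ν + 1)) (Ioc 0 1) := by
    intro r hr
    have hr0 : (0:ℝ) < r := hr.1
    simp only [Complex.norm_real, Real.norm_eq_abs, sq_abs]
    rw [← Real.rpow_natCast (r ^ ν) 2, ← Real.rpow_mul hr0.le,
      show ν * (2:ℕ) = (2*ν+1) - 1 by push_cast; ring,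
      show r ^ (2*ν+1-1) * r = r ^ (2*ν+1-1) * r ^ (1:ℝ) by rw [Real.rpow_one],
      ← Real.rpow_add hr0]
    ring_nf
  have hIntN : IntervalIntegrable (fun r : ℝ => (‖((ν * r ^ (ν - 1) : ℝ) : ℂ)‖ ^ 2 + ν ^ 2 / r ^ 2 * ‖((r ^ ν : ℝ) : ℂ)‖ ^ 2) * r) volume 0 1 := by
    have hbase : IntervalIntegrable (fun x : ℝ => 2 * ν ^ 2 * x ^ (2*ν-1)) volume 0 1 :=
      (intervalIntegral.intervalIntegrable_rpow' (by linarith)).const_mul _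
    rw [intervalIntegrable_iff_integrableOn_Ioc_of_le zero_le_one]
    exact hbase.1.congr_fun heq.symm measurableSet_Ioc
  have hN : (∫ r in (0:ℝ)..1, (‖((ν * r ^ (ν - 1) : ℝ) : ℂ)‖ ^ 2 + ν ^ 2 / r ^ 2 * ‖((r ^ ν : ℝ) : ℂ)‖ ^ 2) * r) = ν := by
    rw [intervalIntegral.integral_of_le zero_le_one, setIntegral_congr_fun measurableSet_Ioc heq,
      ← intervalIntegral.integral_of_le zero_le_one,
      intervalIntegral.integral_const_mul, integral_rpow (Or.inl (by linarith))]
    rw [Real.one_rpow, Real.zero_rpow (by linarith)]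
    field_simp; ring
  have hD : (∫ r in (0:ℝ)..1, ‖((r ^ ν : ℝ) : ℂ)‖ ^ 2 * r) = 1 / (2 * ν + 2) := by
    rw [intervalIntegral.integral_of_le zero_le_one, setIntegral_congr_fun measurableSet_Ioc heqd,
      ← intervalIntegral.integral_of_le zero_le_one, integral_rpow (Or.inl (by linarith))]
    rw [Real.one_rpow, Real.zero_rpow (by linarith)]
    ring_nf
  refine ⟨fun r => ((r ^ ν : ℝ) : ℂ), fun r => ((ν * r ^ (ν - 1) : ℝ) : ℂ), ?_, ?_, ?_, ?_, ?_, hIntN, ?_⟩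
  · exact Complex.continuous_ofReal.comp_continuousOn
      (fun x _ => (Real.continuousAt_rpow_const x ν (Or.inr hν.le)).continuousWithinAt)
  · intro r hr
    exact (Real.hasDerivAt_rpow_const (Or.inl hr.1.ne')).ofReal_comp
  · exact Complex.continuous_ofReal.comp_continuousOn
      ((continuousOn_const.mul (fun x hx =>
        (Real.continuousAt_rpow_const x (ν-1) (Or.inl hx.1.ne')).continuousWithinAt)))
  · simp [Real.zero_rpow hν.ne']
  · exact ⟨1, ⟨zero_le_one, le_rfl⟩, by simp⟩
  · rw [hN, hD]
    field_simp; ring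

/-- `λ(ν) = (j'_ν)²` expressed variationally. -/
def lam (ν : ℝ) : ℝ := sInf (besselRayleighSet ν)

/-- **Proposition B.1.**  For `ν > 0`, `2ν ≤ λ(ν) ≤ 2ν(1+ν)`, i.e.
`√(2ν) ≤ j'_ν ≤ √(2ν(1+ν))` for the first positive zero `j'_ν` of `J_ν'`. -/
theorem bessel_derivative_zero_bounds (ν : ℝ) (hν : 0 < ν) :
    2 * ν ≤ lam ν ∧ lam ν ≤ 2 * ν * (1 + ν) :=
  ⟨le_csInf ⟨_, upper_mem ν hν⟩ (lower_bound ν hν),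
   csInf_le ⟨2 * ν, fun t ht => lower_bound ν hν t ht⟩ (upper_mem ν hν)⟩
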